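/- Let G be a continuous self-map of a compact metric space Q and let (X_n)_{n≥1} be a sequence of periodic orbits of G with strictly increasing periods π(X_n); let μ_n be the uniform atomic probability measure on X_n. Assume there are sequences (γ_n)_{n≥1} with γ_n > 0 and (κ_n)_{n≥1} with κ_n ∈ (0,1] such that for each n the orbit X_{n+1} is a (γ_n, κ_n)-good approximation of X_n, Σ_{n=1}^∞ γ_n < ∞, and ∏_{n=1}^∞ κ_n > 0, and let μ be the weak-* limit of (μ_n). Set r_n = Σ_{k=n}^∞ γ_k. Then for every n and every point x ∈ X_n one has μ(closure(B(x, r_n))) ≥ (∏_{k=n}^∞ κ_k) · (1/π(X_n)) > 0, where B(x, r) denotes the open ball of radius r centered at x. -/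

import Mathlib

open MeasureTheory Filter Metric Topology
open scoped ENNReal

/-- The uniform atomic probability measure on a finite set `X`:
`μ_X = (1/#X) ∑_{x ∈ X} δ_x`. -/
noncomputable def unifOrbit {Q : Type*} [MeasurableSpace Q] (X : Finset Q) :
    Measure Q := ((X.card : ℝ≥0∞))⁻¹ • ∑ x ∈ X, Measure.dirac x

/-- `X` is a periodic orbit of `G`: the orbit of a periodic point, with period `π(X) = #X`. -/
def IsPeriodicOrbit {Q : Type*} (G : Q → Q) (X : Finset Q) : Prop :=
  0 < X.card ∧ ∃ x : Q, G^[X.card] x = x ∧ (X : Set Q) = {y | ∃ i < X.card, G^[i] x = y}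

/-- `Y` is a `(γ, κ)`-good approximation of `X` (both periodic orbits of `G`). -/
def GoodApprox {Q : Type*} [MetricSpace Q] (G : Q → Q) (γ κ : ℝ) (Y X : Finset Q) : Prop :=
  ∃ (Γ : Finset Q) (ρ : Q → Q),
    Γ ⊆ Y ∧ (∀ y ∈ Γ, ρ y ∈ X) ∧
    (∀ y ∈ Γ, ∀ j < X.card, dist (G^[j] y) (G^[j] (ρ y)) < γ) ∧
    κ ≤ (Γ.card : ℝ) / (Y.card : ℝ) ∧
    ∃ c : ℕ, ∀ x ∈ X, Set.ncard {y : Q | y ∈ Γ ∧ ρ y = x} = c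

open Classical in
lemma unifOrbit_apply {Q : Type*} [MeasurableSpace Q] (X : Finset Q) {S : Set Q}
    (hS : MeasurableSet S) :
    unifOrbit X S = ((X.filter (fun y => y ∈ S)).card : ℝ≥0∞) / X.card := by
  rw [unifOrbit, Measure.smul_apply, Measure.finset_sum_apply]
  have : ∀ y ∈ X, Measure.dirac y S = if y ∈ S then (1:ℝ≥0∞) else 0 := by
    intro y _
    rw [Measure.dirac_apply' y hS]
    by_cases h : y ∈ S <;> simp [h]
  rw [Finset.sum_congr rfl this, Finset.sum_boole]
  simp [div_eq_mul_inv, mul_comm]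

lemma unifOrbit_prob {Q : Type*} [MeasurableSpace Q] (X : Finset Q) (h : 0 < X.card) :
    IsProbabilityMeasure (unifOrbit X) := by
  constructor
  rw [unifOrbit_apply X MeasurableSet.univ]
  simp only [Set.mem_univ, Finset.filter_true]
  rw [ENNReal.div_self] <;> simp [h.ne']

lemma hasProd_shift (κ : ℕ → ℝ) (hκ : ∀ n, κ n ∈ Set.Ioc (0:ℝ) 1)
    (h3 : ∃ P : ℝ, 0 < P ∧ Tendsto (fun n => ∏ k ∈ Finset.range n, κ k) atTop (𝓝 P))
    (n : ℕ) :
    ∃ T : ℝ, 0 < T ∧ HasProd (fun k => κ (n + k)) T := by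
  obtain ⟨P, hP, hPlim⟩ := h3
  have hκpos : ∀ k, 0 < κ k := fun k => (hκ k).1
  have hκle : ∀ k, κ k ≤ 1 := fun k => (hκ k).2
  have hanti : Antitone (fun m => ∏ k ∈ Finset.range m, κ k) := by
    apply antitone_nat_of_succ_le
    intro m
    rw [Finset.prod_range_succ]
    nlinarith [Finset.prod_pos (fun k (_ : k ∈ Finset.range m) => hκpos k), hκle m, hκpos m]
  have hgeP : ∀ m, P ≤ ∏ k ∈ Finset.range m, κ k := by
    intro m
    refine le_of_tendsto hPlim ?_
    filter_upwards [eventually_ge_atTop m] with j hj using hanti hj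
  have hlogsum : Summable (fun k => -Real.log (κ k)) := by
    apply summable_of_sum_range_le
      (fun k => neg_nonneg.2 (Real.log_nonpos (hκpos k).le (hκle k)))
    intro m
    have h1 : ∑ k ∈ Finset.range m, -Real.log (κ k)
        = -Real.log (∏ k ∈ Finset.range m, κ k) := by
      rw [Real.log_prod (fun k _ => (hκpos k).ne'), ← Finset.sum_neg_distrib]
    rw [h1]
    exact neg_le_neg (Real.log_le_log hP (hgeP m))
  have hlog : Summable (fun k => Real.log (κ k)) := by
    simpa using hlogsum.neg
  have hshift : Summable (fun k => Real.log (κ (n + k))) := by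
    have := (summable_nat_add_iff n).2 hlog
    simpa [add_comm] using this
  refine ⟨Real.exp (∑' k, Real.log (κ (n + k))), Real.exp_pos _, ?_⟩
  have := hshift.hasSum.rexp
  convert this using 2 with k
  exact (Real.exp_log (hκpos (n + k))).symm

open Classical in
lemma key_count {Q : Type*} [MetricSpace Q] (G : Q → Q) (X : ℕ → Finset Q)
    (hXpos : ∀ n, 0 < (X n).card)
    (γ κ : ℕ → ℝ) (hκ : ∀ n, κ n ∈ Set.Ioc (0:ℝ) 1)
    (h1 : ∀ n, GoodApprox G (γ n) (κ n) (X (n + 1)) (X n))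
    (n : ℕ) (x : Q) (hx : x ∈ X n) : ∀ m : ℕ,
    (∏ k ∈ Finset.range m, κ (n + k)) / ((X n).card : ℝ) ≤
      (((X (n + m)).filter
        (fun y => y ∈ Metric.closedBall x (∑ k ∈ Finset.range m, γ (n + k)))).card : ℝ) /
        ((X (n + m)).card : ℝ) := by
  intro m
  induction m with
  | zero =>
      simp only [Finset.range_zero, Finset.prod_empty, Finset.sum_empty, Nat.add_zero]
      have hxf : x ∈ (X n).filter (fun y => y ∈ Metric.closedBall x (0:ℝ)) := by
        simp [hx, Metric.mem_closedBall]
      have h1le : (1 : ℝ) ≤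
          (((X n).filter (fun y => y ∈ Metric.closedBall x (0:ℝ))).card : ℝ) := by
        exact_mod_cast Finset.card_pos.2 ⟨x, hxf⟩
      have hc : (0:ℝ) < ((X n).card : ℝ) := by exact_mod_cast hXpos n
      exact (div_le_div_iff_of_pos_right hc).2 h1le
  | succ m ih =>
      obtain ⟨Γ, ρ, hΓY, hρX, hdist, hfrac, c, hfib⟩ := h1 (n + m)
      set s : ℝ := ∑ k ∈ Finset.range m, γ (n + k) with hs
      set A : Finset Q := (X (n + m)).filter (fun y => y ∈ Metric.closedBall x s) with hA
      set B : Finset Q := Γ.filter (fun y => ρ y ∈ Metric.closedBall x s) with hB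
      have hc0 : (0:ℝ) < ((X (n + m)).card : ℝ) := by exact_mod_cast hXpos (n + m)
      have hc1 : (0:ℝ) < ((X (n + m + 1)).card : ℝ) := by exact_mod_cast hXpos (n + m + 1)
      have hfib' : ∀ a ∈ X (n + m), ((Γ.filter (fun y => ρ y = a)).card) = c := by
        intro a ha
        have := hfib a ha
        rw [show {y : Q | y ∈ Γ ∧ ρ y = a} = ↑(Γ.filter (fun y => ρ y = a)) by
          ext y; simp] at this
        rwa [Set.ncard_coe_finset] at this
      have hΓcard : Γ.card = (X (n + m)).card * c := by
        rw [Finset.card_eq_sum_card_fiberwise (fun y hy => hρX y hy)]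
        rw [Finset.sum_congr rfl (fun a ha => hfib' a ha), Finset.sum_const, smul_eq_mul]
      have hBcard : B.card = A.card * c := by
        have hmap : ∀ y ∈ B, ρ y ∈ A := by
          intro y hy
          rw [hB, Finset.mem_filter] at hy
          rw [hA, Finset.mem_filter]
          exact ⟨hρX y hy.1, hy.2⟩
        rw [Finset.card_eq_sum_card_fiberwise hmap]
        have : ∀ a ∈ A, (B.filter (fun y => ρ y = a)).card
            = (Γ.filter (fun y => ρ y = a)).card := by
          intro a ha
          congr 1
          ext y
          rw [hA, Finset.mem_filter] at ha
          simp only [hB, Finset.mem_filter, and_assoc]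
          constructor
          · rintro ⟨h1', _, h3'⟩; exact ⟨h1', h3'⟩
          · rintro ⟨h1', h3'⟩; exact ⟨h1', h3' ▸ ha.2, h3'⟩
        rw [Finset.sum_congr rfl this,
          Finset.sum_congr rfl (fun a ha => hfib' a (Finset.mem_filter.1 ha).1),
          Finset.sum_const, smul_eq_mul]
      have hsub : B ⊆ (X (n + m + 1)).filter
          (fun y => y ∈ Metric.closedBall x (∑ k ∈ Finset.range (m+1), γ (n + k))) := by
        intro y hy
        rw [hB, Finset.mem_filter] at hy
        rw [Finset.mem_filter]
        refine ⟨hΓY hy.1, ?_⟩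
        rw [Metric.mem_closedBall] at hy ⊢
        have hd : dist y (ρ y) < γ (n + m) := by
          have := hdist y hy.1 0 (hXpos (n + m))
          simpa using this
        rw [Finset.sum_range_succ]
        calc dist y x ≤ dist y (ρ y) + dist (ρ y) x := dist_triangle _ _ _
          _ ≤ s + γ (n + m) := by linarith [hy.2]
          _ = ∑ k ∈ Finset.range m, γ (n + k) + γ (n + m) := by rw [hs]
      have hcard_le : (B.card : ℝ) ≤
          (((X (n + m + 1)).filter (fun y => y ∈ Metric.closedBall x
            (∑ k ∈ Finset.range (m+1), γ (n + k)))).card : ℝ) :=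
        by exact_mod_cast Finset.card_le_card hsub
      have hκm := hκ (n + m)
      have hAnn : (0:ℝ) ≤ (A.card : ℝ) / ((X (n+m)).card : ℝ) :=
        div_nonneg (Nat.cast_nonneg _) (Nat.cast_nonneg _)
      have step1 : (∏ k ∈ Finset.range (m+1), κ (n + k)) / ((X n).card : ℝ)
          ≤ ((A.card : ℝ) / ((X (n+m)).card : ℝ)) * ((Γ.card : ℝ) / ((X (n+m+1)).card : ℝ)) := by
        rw [Finset.prod_range_succ]
        have h' := mul_le_mul ih hfrac hκm.1.le hAnn
        calc (∏ k ∈ Finset.range m, κ (n + k)) * κ (n + m) / ((X n).card : ℝ)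
            = ((∏ k ∈ Finset.range m, κ (n + k)) / ((X n).card : ℝ)) * κ (n + m) := by ring
          _ ≤ _ := h'
      have step2 : ((A.card : ℝ) / ((X (n+m)).card : ℝ)) * ((Γ.card : ℝ) / ((X (n+m+1)).card : ℝ))
          = (B.card : ℝ) / ((X (n+m+1)).card : ℝ) := by
        rw [hΓcard, hBcard]
        push_cast
        field_simp
      calc (∏ k ∈ Finset.range (m+1), κ (n + k)) / ((X n).card : ℝ)
          ≤ _ := step1
        _ = (B.card : ℝ) / ((X (n+m+1)).card : ℝ) := step2
        _ ≤ _ := (div_le_div_iff_of_pos_right hc1).2 hcard_le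

/-- Lemma 2.6 (`l.m`): under the hypotheses of Lemma 2.5, with `μ` the weak-* limit of
the uniform measures `μ_n` on the orbits `X_n`, setting `r_n = ∑_{k ≥ n} γ_k` one has
`μ(closure(B(x, r_n))) ≥ (∏_{k ≥ n} κ_k) · (1/π(X_n)) > 0` for every `x ∈ X_n`. -/
theorem stmt3 {Q : Type*} [MetricSpace Q] [CompactSpace Q]
    [MeasurableSpace Q] [BorelSpace Q]
    (G : Q → Q) (hG : Continuous G)
    (X : ℕ → Finset Q) (hXper : ∀ n, IsPeriodicOrbit G (X n))
    (hXmono : StrictMono fun n => (X n).card)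
    (γ : ℕ → ℝ) (hγ : ∀ n, 0 < γ n)
    (κ : ℕ → ℝ) (hκ : ∀ n, κ n ∈ Set.Ioc (0 : ℝ) 1)
    (h1 : ∀ n, GoodApprox G (γ n) (κ n) (X (n + 1)) (X n))
    (h2 : Summable γ)
    (h3 : ∃ P : ℝ, 0 < P ∧
      Tendsto (fun n => ∏ k ∈ Finset.range n, κ k) atTop (𝓝 P))
    (μ : Measure Q) (hμprob : IsProbabilityMeasure μ)
    (hμlim : ∀ φ : C(Q, ℝ),
      Tendsto (fun n => ∫ y, φ y ∂(unifOrbit (X n))) atTop (𝓝 (∫ y, φ y ∂μ)))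
    (r : ℕ → ℝ) (hr : ∀ n, r n = ∑' k : ℕ, γ (n + k)) :
    ∀ n : ℕ, ∀ x ∈ X n,
      ENNReal.ofReal ((∏' k : ℕ, κ (n + k)) * (1 / ((X n).card : ℝ))) ≤
          μ (closure (Metric.ball x (r n))) ∧
        0 < μ (closure (Metric.ball x (r n))) := by
  classical
  intro n x hx
  have hXpos : ∀ m, 0 < (X m).card := fun m => (hXper m).1
  have hcXn : (0:ℝ) < ((X n).card : ℝ) := by exact_mod_cast hXpos n
  obtain ⟨T, hT, hprod⟩ := hasProd_shift κ hκ h3 n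
  have hTprod : (∏' k : ℕ, κ (n + k)) = T := hprod.tprod_eq
  have htend : Tendsto (fun m => ∏ k ∈ Finset.range m, κ (n + k)) atTop (𝓝 T) :=
    hprod.tendsto_prod_nat
  have hγsum : Summable (fun k => γ (n + k)) := by
    have := (summable_nat_add_iff n).2 h2
    simpa [add_comm] using this
  have hsm : ∀ m, (∑ k ∈ Finset.range m, γ (n + k)) < r n := by
    intro m
    rw [hr]
    have h1' : ∑ k ∈ Finset.range (m+1), γ (n + k) ≤ ∑' k, γ (n + k) :=
      Summable.sum_le_tsum _ (fun k _ => (hγ _).le) hγsum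
    rw [Finset.sum_range_succ] at h1'
    linarith [hγ (n + m)]
  set F := closure (Metric.ball x (r n)) with hF
  have hFc : IsClosed F := isClosed_closure
  -- lower bound on unifOrbit (X (n+m)) F
  have hbound : ∀ m : ℕ,
      ENNReal.ofReal ((∏ k ∈ Finset.range m, κ (n + k)) / ((X n).card : ℝ)) ≤
        unifOrbit (X (n + m)) F := by
    intro m
    have hkey := key_count G X hXpos γ κ hκ h1 n x hx m
    set S := Metric.closedBall x (∑ k ∈ Finset.range m, γ (n + k)) with hS
    have hSm : MeasurableSet S := measurableSet_closedBall
    have hsubF : S ⊆ F :=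
      (Metric.closedBall_subset_ball (hsm m)).trans subset_closure
    have happ : unifOrbit (X (n + m)) S
        = (((X (n + m)).filter (fun y => y ∈ S)).card : ℝ≥0∞) / ((X (n + m)).card) :=
      unifOrbit_apply _ hSm
    have h2' : ENNReal.ofReal ((∏ k ∈ Finset.range m, κ (n + k)) / ((X n).card : ℝ)) ≤
        unifOrbit (X (n + m)) S := by
      rw [happ]
      refine le_trans (ENNReal.ofReal_le_ofReal hkey) ?_
      rw [ENNReal.ofReal_div_of_pos (by exact_mod_cast hXpos (n + m))]
      simp [ENNReal.ofReal_natCast]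
    exact h2'.trans (measure_mono hsubF)
  -- portmanteau
  let μs : ℕ → ProbabilityMeasure Q := fun i => ⟨unifOrbit (X i), unifOrbit_prob _ (hXpos i)⟩
  let μP : ProbabilityMeasure Q := ⟨μ, hμprob⟩
  have hconv : Tendsto μs atTop (𝓝 μP) := by
    rw [ProbabilityMeasure.tendsto_iff_forall_integral_tendsto]
    intro f
    exact hμlim f.toContinuousMap
  have hlimsup : (atTop.limsup fun i => (μs i : Measure Q) F) ≤ μ F :=
    ProbabilityMeasure.limsup_measure_closed_le_of_tendsto hconv hFc
  -- connect
  have htd : Tendsto (fun m => ENNReal.ofReal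
      ((∏ k ∈ Finset.range m, κ (n + k)) / ((X n).card : ℝ))) atTop
      (𝓝 (ENNReal.ofReal (T / ((X n).card : ℝ)))) :=
    (ENNReal.continuous_ofReal.tendsto _).comp (htend.div_const _)
  have hliminf : ENNReal.ofReal (T / ((X n).card : ℝ)) ≤
      atTop.liminf (fun m => (μs (n + m) : Measure Q) F) := by
    rw [← htd.liminf_eq]
    exact liminf_le_liminf (Eventually.of_forall (fun m => hbound m))
  have hshift_le : atTop.liminf (fun m => (μs (n + m) : Measure Q) F) ≤
      atTop.limsup (fun i => (μs i : Measure Q) F) := by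
    refine le_trans liminf_le_limsup ?_
    have : (fun m => (μs (n + m) : Measure Q) F)
        = (fun i => (μs i : Measure Q) F) ∘ (fun m => n + m) := rfl
    rw [this, limsup_comp]
    refine limsup_le_limsup_of_le ?_
    rw [← Filter.tendsto_id']
    simpa [add_comm] using tendsto_add_atTop_nat n
  have hmain : ENNReal.ofReal (T / ((X n).card : ℝ)) ≤ μ F :=
    (hliminf.trans hshift_le).trans hlimsup
  have heq : (∏' k : ℕ, κ (n + k)) * (1 / ((X n).card : ℝ)) = T / ((X n).card : ℝ) := by
    rw [hTprod]; ring
  constructor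
  · rw [heq]; exact hmain
  · rw [heq] at *
    exact lt_of_lt_of_le (ENNReal.ofReal_pos.2 (div_pos hT hcXn)) hmain
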